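/- Let Δ ≥ 1 and m > k ≥ 3 be integers and suppose that no Sauer Matrix S of size k admits a vector t ∈ [0,1)^k ∩ (1/Δ)ℤ^k \ {0} such that t+S is totally 1-submodular. Then for every t ∈ ([0,1)^m ∩ (1/Δ)ℤ^m) \ {0} and every A ∈ {-1,0,1}^{m×n} with pairwise distinct columns such that t+A is totally 1-submodular, one has n ≤ 2·(C(m,0)+C(m,1)+…+C(m,k−1)); that is, h_s^Δ(m) ≤ 2·Σ_{i=0}^{k−1} C(m,i). -/

import Mathlib

open Matrix

/-- Every `k×k` minor of `A` is at most `c` in absolute value. -/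
def MinorsLE {m n : ℕ} (k : ℕ) (A : Matrix (Fin m) (Fin n) ℝ) (c : ℝ) : Prop :=
  ∀ (f : Fin k ↪ Fin m) (g : Fin k ↪ Fin n), |(A.submatrix f g).det| ≤ c

/-- `A` is totally 1-submodular: all its minors, of any size, are at most `1`
in absolute value. -/
def Totally1Submodular {m n : ℕ} (A : Matrix (Fin m) (Fin n) ℝ) : Prop :=
  ∀ k : ℕ, MinorsLE k A 1

/-- The shifted matrix `t + A`, whose columns are `t + A_j`. -/
def shiftMat {m n : ℕ} (t : Fin m → ℝ) (A : Matrix (Fin m) (Fin n) ℝ) :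
    Matrix (Fin m) (Fin n) ℝ :=
  Matrix.of fun i j => t i + A i j

/-- All entries of `A` lie in `{-1, 0, 1}`. -/
def SignEntries {m n : ℕ} (A : Matrix (Fin m) (Fin n) ℝ) : Prop :=
  ∀ i j, A i j = -1 ∨ A i j = 0 ∨ A i j = 1

/-- The data admissible for the shifted Heller constant `h_s(m)`: a translation vector
`t ∈ [0,1)^m \ {0}` and a matrix `A ∈ {-1,0,1}^{m×n}` with pairwise distinct columns
such that `t + A` is totally 1-submodular. -/
def ShiftedAdmissible (m n : ℕ) (t : Fin m → ℝ) (A : Matrix (Fin m) (Fin n) ℝ) : Prop :=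
  (∀ i, 0 ≤ t i ∧ t i < 1) ∧ t ≠ 0 ∧ SignEntries A ∧
    Function.Injective A.transpose ∧ Totally1Submodular (shiftMat t A)

/-- A Sauer Matrix of size `k`: a `{-1,0,1}`-matrix of format `k × 2^k` having, for each
subset `E ⊆ {1,…,k}`, exactly one column whose support equals `E`. -/
def IsSauer {k : ℕ} (S : Matrix (Fin k) (Fin (2 ^ k)) ℝ) : Prop :=
  SignEntries S ∧ ∀ E : Set (Fin k), ∃! j : Fin (2 ^ k), ∀ i, S i j ≠ 0 ↔ i ∈ E

/-! ### Auxiliary material -/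

section Aux

def emb2 {m : ℕ} {i i' : Fin m} (h : i ≠ i') : Fin 2 ↪ Fin m :=
  ⟨![i, i'], by intro a b hab; fin_cases a <;> fin_cases b <;> simp_all⟩

def emb3 {m : ℕ} {i i' i'' : Fin m} (h1 : i ≠ i') (h2 : i ≠ i'') (h3 : i' ≠ i'') :
    Fin 3 ↪ Fin m :=
  ⟨![i, i', i''], by intro a b hab; fin_cases a <;> fin_cases b <;> simp_all⟩

lemma minor1 {m n : ℕ} {M : Matrix (Fin m) (Fin n) ℝ} (h : Totally1Submodular M)
    (i : Fin m) (j : Fin n) : |M i j| ≤ 1 := by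
  have := h 1 ⟨fun _ => i, fun a b _ => Subsingleton.elim a b⟩
    ⟨fun _ => j, fun a b _ => Subsingleton.elim a b⟩
  simp [Matrix.det_fin_one] at this; exact this

lemma minor2 {m n : ℕ} {M : Matrix (Fin m) (Fin n) ℝ} (h : Totally1Submodular M)
    {i i' : Fin m} {j j' : Fin n} (hi : i ≠ i') (hj : j ≠ j') :
    |M i j * M i' j' - M i j' * M i' j| ≤ 1 := by
  have := h 2 (emb2 hi) (emb2 hj)
  simp [Matrix.det_fin_two, emb2] at this; exact this

lemma minor3 {m n : ℕ} {M : Matrix (Fin m) (Fin n) ℝ} (h : Totally1Submodular M)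
    {i i' i'' : Fin m} {j j' j'' : Fin n}
    (hi1 : i ≠ i') (hi2 : i ≠ i'') (hi3 : i' ≠ i'')
    (hj1 : j ≠ j') (hj2 : j ≠ j'') (hj3 : j' ≠ j'') :
    |M i j * M i' j' * M i'' j'' - M i j * M i' j'' * M i'' j' -
      M i j' * M i' j * M i'' j'' + M i j' * M i' j'' * M i'' j +
      M i j'' * M i' j * M i'' j' - M i j'' * M i' j' * M i'' j| ≤ 1 := by
  have := h 3 (emb3 hi1 hi2 hi3) (emb3 hj1 hj2 hj3)
  simp [Matrix.det_fin_three, emb3] at this; exact this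

set_option maxHeartbeats 1000000 in
lemma sauer3_arith (s₁ s₂ s₃ a₁ a₂ b₁ b₃ d₂ d₃ : ℝ)
    (hs₁ : s₁ = -1 ∨ s₁ = 1) (hs₂ : s₂ = -1 ∨ s₂ = 1) (hs₃ : s₃ = -1 ∨ s₃ = 1)
    (ha₁ : a₁ = -1 ∨ a₁ = 1) (ha₂ : a₂ = -1 ∨ a₂ = 1)
    (hb₁ : b₁ = -1 ∨ b₁ = 1) (hb₃ : b₃ = -1 ∨ b₃ = 1)
    (hd₂ : d₂ = -1 ∨ d₂ = 1) (hd₃ : d₃ = -1 ∨ d₃ = 1)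
    (h1 : |s₁ * a₂ - a₁ * s₂| ≤ 1) (h2 : |s₁ * b₃ - b₁ * s₃| ≤ 1)
    (h3 : |s₂ * d₃ - d₂ * s₃| ≤ 1)
    (h4 : |a₁ * 0 * d₃ - a₁ * d₂ * b₃ - b₁ * a₂ * d₃ + b₁ * d₂ * 0 +
      0 * a₂ * b₃ - 0 * 0 * 0| ≤ 1) : False := by
  rcases hs₁ with rfl | rfl <;> rcases hs₂ with rfl | rfl <;> rcases hs₃ with rfl | rfl <;>
    rcases ha₁ with rfl | rfl <;> rcases ha₂ with rfl | rfl <;>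
    rcases hb₁ with rfl | rfl <;> rcases hb₃ with rfl | rfl <;>
    rcases hd₂ with rfl | rfl <;> rcases hd₃ with rfl | rfl <;>
    (revert h1 h2 h3 h4; norm_num)

section ColumnLemmas

variable {m n : ℕ} {t : Fin m → ℝ} {A : Matrix (Fin m) (Fin n) ℝ}
  (hs : SignEntries A) (h01 : ∀ i, 0 ≤ t i ∧ t i < 1)
  (hTU : Totally1Submodular (shiftMat t A))

include hs h01 hTU

lemma no_one (i : Fin m) (j : Fin n) (hti : t i ≠ 0) : A i j = -1 ∨ A i j = 0 := by
  have h1 := minor1 hTU i j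
  simp only [shiftMat, Matrix.of_apply, abs_le] at h1
  have h0 : 0 < t i := lt_of_le_of_ne (h01 i).1 (Ne.symm hti)
  rcases hs i j with h | h | h
  · exact Or.inl h
  · exact Or.inr h
  · rw [h] at h1; linarith [h1.2]

omit h01 in
lemma prop2 {i i' : Fin m} {j j' : Fin n} (hti : t i = 0) (hti' : t i' = 0)
    (hii' : i ≠ i') (hjj' : j ≠ j') (hij : A i j' = A i j) (h0 : A i j ≠ 0)
    (h0' : A i' j ≠ 0) (h0'' : A i' j' ≠ 0) : A i' j' = A i' j := by
  have h2 := minor2 hTU hii' hjj'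
  simp only [shiftMat, Matrix.of_apply, hti, hti', zero_add] at h2
  rcases hs i j with h | h | h <;> rcases hs i' j with ha | ha | ha <;>
    rcases hs i' j' with hb | hb | hb <;>
    first
    | exact absurd h h0
    | exact absurd ha h0'
    | exact absurd hb h0''
    | exact hb.trans ha.symm
    | (exfalso; rw [hij, h, ha, hb] at h2; norm_num at h2)

/-- two distinct columns with the same support are opposite at every zero-shift
row of the support, and such a row exists -/
lemma pair_opp {j j' : Fin n} (hjj' : j ≠ j')
    (hsupp : ∀ i, A i j = 0 ↔ A i j' = 0)
    (hne : ∃ i, A i j ≠ A i j') :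
    (∃ i, t i = 0 ∧ A i j ≠ 0) ∧
      (∀ i, t i = 0 → A i j ≠ 0 → A i j' = -A i j) := by
  obtain ⟨i₀, hi₀⟩ := hne
  have h0a : A i₀ j ≠ 0 := by
    intro h; exact hi₀ (by rw [h, ((hsupp i₀).mp h)])
  have h0b : A i₀ j' ≠ 0 := fun h => h0a ((hsupp i₀).mpr h)
  have ht0 : t i₀ = 0 := by
    by_contra h
    rcases no_one hs h01 hTU i₀ j h with h1 | h1
    · rcases no_one hs h01 hTU i₀ j' h with h2 | h2
      · exact hi₀ (by rw [h1, h2])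
      · exact h0b h2
    · exact h0a h1
  have hopp₀ : A i₀ j' = -A i₀ j := by
    rcases hs i₀ j with h | h | h <;> rcases hs i₀ j' with h' | h' | h' <;>
      first
      | exact absurd h h0a
      | exact absurd h' h0b
      | exact absurd (h.trans h'.symm) hi₀
      | (rw [h, h']; try norm_num)
  refine ⟨⟨i₀, ht0, h0a⟩, fun i hti h0i => ?_⟩
  by_cases hii : i = i₀
  · subst hii; exact hopp₀
  have h0i' : A i j' ≠ 0 := fun h => h0i ((hsupp i).mpr h)
  by_contra hcon
  have heq : A i j' = A i j := by
    rcases hs i j with h | h | h <;> rcases hs i j' with h' | h' | h' <;>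
      first
      | exact absurd h h0i
      | exact absurd h' h0i'
      | exact h'.trans h.symm
      | (exfalso; rw [h, h'] at hcon; norm_num at hcon)
  have heq2 := prop2 hs hTU (i' := i₀) (j := j) (j' := j') hti ht0 hii hjj' heq h0i h0a h0b
  have h2 : A i₀ j = -A i₀ j := heq2 ▸ hopp₀
  have h3 : A i₀ j = 0 := by linarith
  exact h0a h3

/-- at most two columns share a given support -/
lemma fiber_le_two (hinj : Function.Injective A.transpose)
    {j₁ j₂ j₃ : Fin n} (h12 : j₁ ≠ j₂) (h13 : j₁ ≠ j₃) (h23 : j₂ ≠ j₃)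
    (hs12 : ∀ i, A i j₁ = 0 ↔ A i j₂ = 0) (hs13 : ∀ i, A i j₁ = 0 ↔ A i j₃ = 0) :
    False := by
  have hne : ∀ {a b : Fin n}, a ≠ b → ∃ i, A i a ≠ A i b := by
    intro a b hab
    by_contra h
    push_neg at h
    exact hab (hinj (funext fun i => h i))
  have hs23 : ∀ i, A i j₂ = 0 ↔ A i j₃ = 0 := fun i => (hs12 i).symm.trans (hs13 i)
  obtain ⟨⟨i₀, ht0, h0⟩, hopp12⟩ := pair_opp hs h01 hTU h12 hs12 (hne h12)
  obtain ⟨_, hopp13⟩ := pair_opp hs h01 hTU h13 hs13 (hne h13)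
  obtain ⟨_, hopp23⟩ := pair_opp hs h01 hTU h23 hs23 (hne h23)
  have h2 : A i₀ j₂ = -A i₀ j₁ := hopp12 i₀ ht0 h0
  have h3 : A i₀ j₃ = -A i₀ j₁ := hopp13 i₀ ht0 h0
  have h02 : A i₀ j₂ ≠ 0 := by rw [h2]; simpa using h0
  have h23' : A i₀ j₃ = -A i₀ j₂ := hopp23 i₀ ht0 h02
  rw [h2, h3, neg_neg] at h23'
  have h4 : A i₀ j₁ = 0 := by linarith
  exact h0 h4

omit h01 in
lemma no_sauer3 {i₁ i₂ i₃ : Fin m} (h12 : i₁ ≠ i₂) (h13 : i₁ ≠ i₃) (h23 : i₂ ≠ i₃)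
    (ht1 : t i₁ = 0) (ht2 : t i₂ = 0) (ht3 : t i₃ = 0)
    {j12 j13 j23 j7 : Fin n}
    (c12a : A i₁ j12 ≠ 0) (c12b : A i₂ j12 ≠ 0) (c12c : A i₃ j12 = 0)
    (c13a : A i₁ j13 ≠ 0) (c13b : A i₂ j13 = 0) (c13c : A i₃ j13 ≠ 0)
    (c23a : A i₁ j23 = 0) (c23b : A i₂ j23 ≠ 0) (c23c : A i₃ j23 ≠ 0)
    (c7a : A i₁ j7 ≠ 0) (c7b : A i₂ j7 ≠ 0) (c7c : A i₃ j7 ≠ 0) : False := by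
  have hpm : ∀ i j, A i j ≠ 0 → A i j = -1 ∨ A i j = 1 := by
    intro i j h; rcases hs i j with h' | h' | h'
    · exact Or.inl h'
    · exact absurd h' h
    · exact Or.inr h'
  have n1 : j7 ≠ j12 := by rintro rfl; exact c7c c12c
  have n2 : j7 ≠ j13 := by rintro rfl; exact c7b c13b
  have n3 : j7 ≠ j23 := by rintro rfl; exact c7a c23a
  have n4 : j12 ≠ j13 := by rintro rfl; exact c12b c13b
  have n5 : j12 ≠ j23 := by rintro rfl; exact c12a c23a
  have n6 : j13 ≠ j23 := by rintro rfl; exact c13a c23a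
  have h1 := minor2 hTU h12 n1
  have h2 := minor2 hTU h13 n2
  have h3 := minor2 hTU h23 n3
  have h4 := minor3 hTU h12 h13 h23 n4 n5 n6
  simp only [shiftMat, Matrix.of_apply, ht1, ht2, ht3, zero_add] at h1 h2 h3 h4
  rw [c23a, c13b, c12c] at h4
  exact sauer3_arith (A i₁ j7) (A i₂ j7) (A i₃ j7) (A i₁ j12) (A i₂ j12)
    (A i₁ j13) (A i₃ j13) (A i₂ j23) (A i₃ j23)
    (hpm _ _ c7a) (hpm _ _ c7b) (hpm _ _ c7c) (hpm _ _ c12a) (hpm _ _ c12b)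
    (hpm _ _ c13a) (hpm _ _ c13c) (hpm _ _ c23b) (hpm _ _ c23c) h1 h2 h3 h4

end ColumnLemmas

open Finset in
lemma no_shatter_pos {Δ m n k : ℕ}
    (hSauer : ∀ S : Matrix (Fin k) (Fin (2 ^ k)) ℝ, IsSauer S →
      ∀ r : Fin k → ℝ, (∀ i, 0 ≤ r i ∧ r i < 1) →
        (∀ i, ∃ z : ℤ, (Δ : ℝ) * r i = (z : ℝ)) → r ≠ 0 →
          ¬ Totally1Submodular (shiftMat r S))
    {t : Fin m → ℝ} {A : Matrix (Fin m) (Fin n) ℝ}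
    (hsign : SignEntries A) (h01 : ∀ i, 0 ≤ t i ∧ t i < 1)
    (hTU : Totally1Submodular (shiftMat t A)) (ht : ∀ i, ∃ z : ℤ, (Δ : ℝ) * t i = (z : ℝ))
    {E : Finset (Fin m)} (hEk : E.card = k)
    (hshat : ∀ F ⊆ E, ∃ j : Fin n, E ∩ (univ.filter fun i => A i j ≠ 0) = F)
    (hpos : ∃ i ∈ E, t i ≠ 0) : False := by
  classical
  set e := E.orderIsoOfFin hEk with he
  set ι : Fin k → Fin m := fun i => (e i : Fin m) with hι
  have hιinj : Function.Injective ι := fun a b h => e.injective (Subtype.ext h)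
  have hιE : ∀ i, ι i ∈ E := fun i => (e i).2
  have hcol : ∀ F : Finset (Fin k), ∃ j : Fin n,
      E ∩ (univ.filter fun i => A i j ≠ 0) = F.image ι := by
    intro F
    exact hshat (F.image ι) (Finset.image_subset_iff.2 fun i _ => hιE i)
  choose col hcolspec using hcol
  have hmem : ∀ (F : Finset (Fin k)) (i : Fin k), A (ι i) (col F) ≠ 0 ↔ i ∈ F := by
    intro F i
    constructor
    · intro h
      have hx : ι i ∈ F.image ι := by
        rw [← hcolspec F]
        exact mem_inter.2 ⟨hιE i, mem_filter.2 ⟨mem_univ _, h⟩⟩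
      obtain ⟨i', hi', hee⟩ := mem_image.1 hx
      rwa [← hιinj hee]
    · intro h
      have hx : ι i ∈ E ∩ (univ.filter fun i' => A i' (col F) ≠ 0) := by
        rw [hcolspec F]; exact mem_image_of_mem ι h
      exact (mem_filter.1 (mem_inter.1 hx).2).2
  have hcolinj : Function.Injective col := by
    intro F F' h
    ext i
    rw [← hmem F i, h, hmem F' i]
  have hcard : Fintype.card (Finset (Fin k)) = 2 ^ k := by simp
  set ψ : Fin (2 ^ k) ≃ Finset (Fin k) := (Fintype.equivFinOfCardEq hcard).symm with hψ
  set S : Matrix (Fin k) (Fin (2 ^ k)) ℝ := Matrix.of fun i c => A (ι i) (col (ψ c)) with hS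
  have hSauerS : IsSauer S := by
    constructor
    · intro i c; exact hsign (ι i) (col (ψ c))
    · intro Es
      set F : Finset (Fin k) := univ.filter (· ∈ Es) with hF
      have hFmem : ∀ i, i ∈ F ↔ i ∈ Es := by intro i; simp [hF]
      refine ⟨ψ.symm F, fun i => ?_, fun c hc => ?_⟩
      · show A (ι i) (col (ψ (ψ.symm F))) ≠ 0 ↔ i ∈ Es
        rw [Equiv.apply_symm_apply]
        exact (hmem F i).trans (hFmem i)
      · have hψc : ψ c = F := by
          ext i
          rw [hFmem i]
          exact ((hmem (ψ c) i).symm).trans (hc i)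
        rw [← hψc, Equiv.symm_apply_apply]
  set r : Fin k → ℝ := fun i => t (ι i) with hr
  have hrne : r ≠ 0 := by
    obtain ⟨x, hxE, hxt⟩ := hpos
    intro h0
    apply hxt
    have hx : ι (e.symm ⟨x, hxE⟩) = x := congrArg Subtype.val (e.apply_symm_apply ⟨x, hxE⟩)
    have h0' : t (ι (e.symm ⟨x, hxE⟩)) = 0 := by
      simpa [hr] using congrFun h0 (e.symm ⟨x, hxE⟩)
    rwa [hx] at h0'
  have hTUS : Totally1Submodular (shiftMat r S) := by
    intro κ f g
    have hgemb : Function.Injective (fun x => col (ψ (g x))) := fun a b h =>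
      g.injective (ψ.injective (hcolinj h))
    have heq : (shiftMat r S).submatrix f g =
        (shiftMat t A).submatrix (⟨fun x => ι (f x), fun a b h => f.injective (hιinj h)⟩ :
          Fin κ ↪ Fin m) (⟨fun x => col (ψ (g x)), hgemb⟩ : Fin κ ↪ Fin n) := by
      ext i j
      simp [shiftMat, hS, hr, Matrix.submatrix]
      rfl
    rw [heq]
    exact hTU κ _ _
  exact hSauer S hSauerS r (fun i => h01 (ι i)) (fun i => ht (ι i)) hrne hTUS

end Aux

theorem stmt12 (Δ m k : ℕ) (hΔ : 1 ≤ Δ) (hk : 3 ≤ k) (hmk : k < m)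
    (hSauer : ∀ S : Matrix (Fin k) (Fin (2 ^ k)) ℝ, IsSauer S →
      ∀ r : Fin k → ℝ, (∀ i, 0 ≤ r i ∧ r i < 1) →
        (∀ i, ∃ z : ℤ, (Δ : ℝ) * r i = (z : ℝ)) → r ≠ 0 →
          ¬ Totally1Submodular (shiftMat r S))
    (n : ℕ) (t : Fin m → ℝ) (A : Matrix (Fin m) (Fin n) ℝ)
    (ht : ∀ i, ∃ z : ℤ, (Δ : ℝ) * t i = (z : ℝ))
    (hadm : ShiftedAdmissible m n t A) :
    n ≤ 2 * ∑ i ∈ Finset.range k, m.choose i := by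
  classical
  obtain ⟨ht01, htne, hsign, hinj, hTU⟩ := hadm
  set supp : Fin n → Finset (Fin m) := fun j => Finset.univ.filter fun i => A i j ≠ 0
    with hsuppdef
  have hmemsupp : ∀ (i : Fin m) (j : Fin n), i ∈ supp j ↔ A i j ≠ 0 := by
    intro i j; simp [hsuppdef]
  set 𝒜 : Finset (Finset (Fin m)) := Finset.univ.image supp with h𝒜
  -- no `k`-element set is shattered by the supports
  have hnoshat : ∀ E : Finset (Fin m), E.card = k → ¬ 𝒜.Shatters E := by
    intro E hEk hsh
    have hshat : ∀ F ⊆ E, ∃ j : Fin n, E ∩ (Finset.univ.filter fun i => A i j ≠ 0) = F := by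
      intro F hF
      obtain ⟨u, hu, huEq⟩ := hsh hF
      obtain ⟨j, -, rfl⟩ := Finset.mem_image.1 hu
      exact ⟨j, huEq⟩
    by_cases hpos : ∃ i ∈ E, t i ≠ 0
    · exact no_shatter_pos hSauer hsign ht01 hTU ht hEk hshat hpos
    · push_neg at hpos
      obtain ⟨E₃, hE₃sub, hE₃card⟩ := Finset.exists_subset_card_eq
        (show 3 ≤ E.card by omega)
      obtain ⟨i₁, i₂, i₃, h12, h13, h23, rfl⟩ := Finset.card_eq_three.1 hE₃card
      have m1 : i₁ ∈ E := hE₃sub (by simp)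
      have m2 : i₂ ∈ E := hE₃sub (by simp)
      have m3 : i₃ ∈ E := hE₃sub (by simp)
      have hin : ∀ {j : Fin n} {F : Finset (Fin m)} {x : Fin m},
          E ∩ (Finset.univ.filter fun i => A i j ≠ 0) = F → x ∈ F → A x j ≠ 0 := by
        intro j F x hEq hx
        rw [← hEq] at hx
        exact (Finset.mem_filter.1 (Finset.mem_inter.1 hx).2).2
      have hout : ∀ {j : Fin n} {F : Finset (Fin m)} {x : Fin m},
          E ∩ (Finset.univ.filter fun i => A i j ≠ 0) = F → x ∈ E → x ∉ F → A x j = 0 := by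
        intro j F x hEq hxE hx
        by_contra h
        exact hx (hEq ▸ (Finset.mem_inter.2
          ⟨hxE, Finset.mem_filter.2 ⟨Finset.mem_univ _, h⟩⟩))
      obtain ⟨j12, hj12⟩ := hshat {i₁, i₂}
        (Finset.insert_subset m1 (Finset.singleton_subset_iff.2 m2))
      obtain ⟨j13, hj13⟩ := hshat {i₁, i₃}
        (Finset.insert_subset m1 (Finset.singleton_subset_iff.2 m3))
      obtain ⟨j23, hj23⟩ := hshat {i₂, i₃}
        (Finset.insert_subset m2 (Finset.singleton_subset_iff.2 m3))
      obtain ⟨j7, hj7⟩ := hshat {i₁, i₂, i₃} hE₃sub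
      refine no_sauer3 hsign hTU h12 h13 h23 (hpos _ m1) (hpos _ m2) (hpos _ m3)
        (hin hj12 (by simp)) (hin hj12 (by simp))
        (hout hj12 m3 (by
          simp only [Finset.mem_insert, Finset.mem_singleton]
          push_neg
          exact ⟨Ne.symm h13, Ne.symm h23⟩))
        (hin hj13 (by simp))
        (hout hj13 m2 (by
          simp only [Finset.mem_insert, Finset.mem_singleton]
          push_neg
          exact ⟨Ne.symm h12, h23⟩))
        (hin hj13 (by simp))
        (hout hj23 m1 (by
          simp only [Finset.mem_insert, Finset.mem_singleton]
          push_neg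
          exact ⟨h12, h13⟩))
        (hin hj23 (by simp)) (hin hj23 (by simp))
        (hin hj7 (by simp)) (hin hj7 (by simp)) (hin hj7 (by simp))
  -- each support is shared by at most two columns
  have hfib : ∀ w ∈ (Finset.univ : Finset (Fin n)).image supp,
      ((Finset.univ : Finset (Fin n)).filter fun j => supp j = w).card ≤ 2 := by
    intro w hw
    by_contra h
    push_neg at h
    obtain ⟨T, hTsub, hTcard⟩ := Finset.exists_subset_card_eq
      (show 3 ≤ ((Finset.univ : Finset (Fin n)).filter fun j => supp j = w).card by omega)
    obtain ⟨j₁, j₂, j₃, g12, g13, g23, rfl⟩ := Finset.card_eq_three.1 hTcard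
    have e1 : supp j₁ = w := (Finset.mem_filter.1 (hTsub (by simp))).2
    have e2 : supp j₂ = w := (Finset.mem_filter.1 (hTsub (by simp))).2
    have e3 : supp j₃ = w := (Finset.mem_filter.1 (hTsub (by simp))).2
    refine fiber_le_two hsign ht01 hTU hinj g12 g13 g23 (fun i => ?_) (fun i => ?_)
    · have h12' : i ∈ supp j₁ ↔ i ∈ supp j₂ := by rw [e1, e2]
      exact not_iff_not.1 (((hmemsupp i j₁).symm.trans h12').trans (hmemsupp i j₂))
    · have h13' : i ∈ supp j₁ ↔ i ∈ supp j₃ := by rw [e1, e3]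
      exact not_iff_not.1 (((hmemsupp i j₁).symm.trans h13').trans (hmemsupp i j₃))
  have hcount1 : n ≤ 2 * 𝒜.card := by
    have h := Finset.card_le_mul_card_image (f := supp) Finset.univ 2 hfib
    simpa [h𝒜] using h
  have hcount2 : 𝒜.card ≤ ∑ i ∈ Finset.range k, m.choose i := by
    have hsub : 𝒜.shatterer ⊆
        (Finset.range k).biUnion fun i => Finset.powersetCard i Finset.univ := by
      intro s hsmem
      have hsh := Finset.mem_shatterer.1 hsmem
      have hlt : s.card < k := by
        by_contra hge
        push_neg at hge
        obtain ⟨E, hEs, hEk⟩ := Finset.exists_subset_card_eq hge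
        exact hnoshat E hEk (hsh.mono_right hEs)
      exact Finset.mem_biUnion.2
        ⟨s.card, Finset.mem_range.2 hlt, Finset.mem_powersetCard_univ.2 rfl⟩
    calc 𝒜.card ≤ 𝒜.shatterer.card := Finset.card_le_card_shatterer 𝒜
      _ ≤ (((Finset.range k).biUnion fun i => Finset.powersetCard i Finset.univ)).card :=
          Finset.card_le_card hsub
      _ ≤ ∑ i ∈ Finset.range k, (Finset.powersetCard i (Finset.univ : Finset (Fin m))).card :=
          Finset.card_biUnion_le
      _ = ∑ i ∈ Finset.range k, m.choose i := by
          refine Finset.sum_congr rfl fun i _ => ?_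
          rw [Finset.card_powersetCard, Finset.card_univ, Fintype.card_fin]
  omega
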